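/- For all n, ℓ ∈ ℕ, the ℓ-th derivative of the n-th Hermite function satisfies ‖d^ℓ H_n / dx^ℓ‖_{L²(ℝ)} ≤ (2n + 2ℓ)^{ℓ/2}, and the ℓ-fold multiplication by x satisfies ‖x^ℓ H_n(x)‖_{L²(ℝ)} ≤ (2n + 2ℓ)^{ℓ/2}. -/

import Mathlib

/-- The Hermite functions: `H 0 = π^{-1/4} e^{-x²/2}` and `H n = (2^n n!)^{-1/2} (-d/dx + x)^n H 0`. -/
noncomputable def hermiteFun (n : ℕ) : ℝ → ℝ := fun x =>
  ((2 ^ n * n.factorial : ℝ) ^ (-(1 : ℝ) / 2)) *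
    ((fun f : ℝ → ℝ => fun t => -deriv f t + t * f t)^[n]
      (fun t => Real.pi ^ (-(1 : ℝ) / 4) * Real.exp (-(t ^ 2) / 2))) x

open Polynomial MeasureTheory Real Filter Finset

namespace HermiteAux

noncomputable def HP : ℕ → Polynomial ℝ
  | 0 => 1
  | (n+1) => Polynomial.C 2 * (Polynomial.X * HP n) - Polynomial.derivative (HP n)

lemma HP_deriv (n : ℕ) : Polynomial.derivative (HP n) = Polynomial.C (2*(n:ℝ)) * HP (n-1) := by
  induction n with
  | zero => simp [HP]
  | succ n ih =>
    match n, ih with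
    | 0, _ => norm_num [HP]
    | (m+1), ih =>
      have ih' : Polynomial.derivative (HP (m+1)) = Polynomial.C (2*((m:ℝ)+1)) * HP m := by
        simpa using ih
      have hc : ((m+1+1:ℕ):ℝ) = (m:ℝ)+2 := by push_cast; ring
      simp only [Nat.add_sub_cancel, hc]
      have hHP : HP (m+1+1) = Polynomial.C 2 * (Polynomial.X * HP (m+1))
          - Polynomial.derivative (HP (m+1)) := rfl
      have hHP1 : HP (m+1) = Polynomial.C 2 * (Polynomial.X * HP m)
          - Polynomial.derivative (HP m) := rfl
      rw [hHP, derivative_sub, derivative_mul, derivative_mul, ih', derivative_mul]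
      simp only [derivative_C, derivative_X, hHP1, C_add, C_mul, map_ofNat, map_natCast, map_one, derivative_add, derivative_mul, derivative_ofNat, derivative_natCast, derivative_one, mul_zero, zero_mul, add_zero, zero_add]
      push_cast
      ring


noncomputable def gauss (x : ℝ) : ℝ := Real.exp (-(x^2)/2)

lemma hasDerivAt_gauss (x : ℝ) : HasDerivAt gauss (-x * gauss x) x := by
  have h1 : HasDerivAt (fun t : ℝ => -(t^2)/2) (-x) x := by
    have := ((hasDerivAt_pow 2 x).neg).div_const 2
    norm_num at this
    exact this.congr_deriv (by ring)
  show HasDerivAt (fun t => Real.exp (-(t^2)/2)) _ x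
  convert h1.exp using 1
  simp [gauss]
  ring

lemma hasDerivAt_polyGauss (p : ℝ[X]) (K x : ℝ) :
    HasDerivAt (fun t => K * (p.eval t * gauss t))
      (K * (((Polynomial.derivative p).eval x - x * p.eval x) * gauss x)) x := by
  have := ((p.hasDerivAt x).mul (hasDerivAt_gauss x)).const_mul K
  exact this.congr_deriv (by ring)

noncomputable def Dc (n : ℕ) : ℝ :=
  ((2 ^ n * n.factorial : ℝ) ^ (-(1 : ℝ) / 2)) * Real.pi ^ (-(1 : ℝ) / 4)

lemma iterate_C (K : ℝ) (n : ℕ) :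
    ((fun f : ℝ → ℝ => fun t => -deriv f t + t * f t)^[n] (fun t => K * gauss t))
      = fun t => K * ((HP n).eval t * gauss t) := by
  induction n with
  | zero => funext t; simp [HP]
  | succ n ih =>
    rw [Function.iterate_succ_apply', ih]
    funext t
    simp only
    rw [(hasDerivAt_polyGauss (HP n) K t).deriv]
    have hHP : HP (n+1) = Polynomial.C 2 * (Polynomial.X * HP n)
        - Polynomial.derivative (HP n) := rfl
    rw [hHP]
    simp only [eval_mul, eval_sub, eval_C, eval_X]
    ring

lemma hermiteFun_eq (n : ℕ) :
    hermiteFun n = fun x => Dc n * ((HP n).eval x * gauss x) := by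
  funext x
  show ((2 ^ n * n.factorial : ℝ) ^ (-(1 : ℝ) / 2)) *
    ((fun f : ℝ → ℝ => fun t => -deriv f t + t * f t)^[n]
      (fun t => Real.pi ^ (-(1 : ℝ) / 4) * gauss t)) x = _
  rw [iterate_C]
  simp only [Dc]
  ring

lemma hermite_hasDerivAt (n : ℕ) (x : ℝ) :
    HasDerivAt (hermiteFun n)
      (Dc n * (((Polynomial.derivative (HP n)).eval x - x * (HP n).eval x) * gauss x)) x := by
  rw [hermiteFun_eq]; exact hasDerivAt_polyGauss _ _ x

lemma hermite_differentiable (n : ℕ) : Differentiable ℝ (hermiteFun n) :=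
  fun x => (hermite_hasDerivAt n x).differentiableAt

lemma hermite_deriv (n : ℕ) (x : ℝ) :
    deriv (hermiteFun n) x
      = Dc n * (((Polynomial.derivative (HP n)).eval x - x * (HP n).eval x) * gauss x) :=
  (hermite_hasDerivAt n x).deriv

lemma DcK (n : ℕ) : Dc n = Real.sqrt (2*((n:ℝ)+1)) * Dc (n+1) := by
  have hx : (0:ℝ) < 2*((n:ℝ)+1) := by positivity
  have hbase : (0:ℝ) < (2 ^ n * n.factorial : ℝ) := by positivity
  have hsplit : ((2 ^ (n+1) * (n+1).factorial : ℝ)) = (2*((n:ℝ)+1)) * (2 ^ n * n.factorial : ℝ) := by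
    rw [Nat.factorial_succ]
    push_cast
    ring
  unfold Dc
  rw [hsplit, Real.mul_rpow hx.le hbase.le, ← mul_assoc, ← mul_assoc,
    Real.sqrt_eq_rpow, ← Real.rpow_add hx]
  norm_num

lemma Dc_half (n : ℕ) : Real.sqrt (((n:ℝ)+1)/2) * Dc (n+1) = Dc n / 2 := by
  rw [DcK n]
  have : 2*((n:ℝ)+1) = 4 * (((n:ℝ)+1)/2) := by ring
  rw [this, show (4:ℝ) * (((n:ℝ)+1)/2) = (2:ℝ)^2 * (((n:ℝ)+1)/2) by norm_num,
    Real.sqrt_mul (by positivity) , Real.sqrt_sq (by norm_num : (0:ℝ) ≤ 2)]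
  ring

lemma Dc_n (n : ℕ) : Real.sqrt ((n:ℝ)/2) * Dc (n-1) = (n:ℝ) * Dc n := by
  cases n with
  | zero => simp
  | succ m =>
    have h := DcK m
    simp only [Nat.add_sub_cancel]
    rw [h]
    push_cast
    rw [← mul_assoc, ← Real.sqrt_mul (by positivity)]
    have : ((m:ℝ)+1)/2 * (2*((m:ℝ)+1)) = ((m:ℝ)+1)^2 := by ring
    rw [this, Real.sqrt_sq (by positivity)]

lemma HP_eval_rec (n : ℕ) (x : ℝ) :
    x * (HP n).eval x * 2 = (HP (n+1)).eval x + 2*(n:ℝ)*((HP (n-1)).eval x) := by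
  have hHP : HP (n+1) = Polynomial.C 2 * (Polynomial.X * HP n)
      - Polynomial.derivative (HP n) := rfl
  rw [hHP, eval_sub, eval_mul, eval_mul, eval_C, eval_X, HP_deriv, eval_mul, eval_C]
  ring

lemma HP_deriv_eval (n : ℕ) (x : ℝ) :
    (Polynomial.derivative (HP n)).eval x = 2*(n:ℝ)*((HP (n-1)).eval x) := by
  rw [HP_deriv, eval_mul, eval_C]

lemma ladder_x (n : ℕ) (x : ℝ) : x * hermiteFun n x
    = Real.sqrt (((n:ℝ)+1)/2) * hermiteFun (n+1) x
      + Real.sqrt ((n:ℝ)/2) * hermiteFun (n-1) x := by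
  simp only [hermiteFun_eq]
  linear_combination (-((HP (n+1)).eval x * gauss x)) * Dc_half n
    - ((HP (n-1)).eval x * gauss x) * Dc_n n
    + (Dc n * gauss x / 2) * HP_eval_rec n x

lemma ladder_d (n : ℕ) (x : ℝ) : deriv (hermiteFun n) x
    = Real.sqrt ((n:ℝ)/2) * hermiteFun (n-1) x
      - Real.sqrt (((n:ℝ)+1)/2) * hermiteFun (n+1) x := by
  rw [hermite_deriv, HP_deriv_eval]
  simp only [hermiteFun_eq]
  linear_combination ((HP (n+1)).eval x * gauss x) * Dc_half n
    - ((HP (n-1)).eval x * gauss x) * Dc_n n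
    - (Dc n * gauss x / 2) * HP_eval_rec n x

noncomputable def pK (q : ℝ[X]) : ℝ :=
  ∑ i ∈ Finset.range (q.natDegree+1), |q.coeff i| * (i.factorial : ℝ)

lemma pK_nonneg (q : ℝ[X]) : 0 ≤ pK q :=
  Finset.sum_nonneg fun i _ => by positivity

lemma abs_poly_le (q : ℝ[X]) (x : ℝ) : |q.eval x| ≤ pK q * Real.exp |x| := by
  conv_lhs => rw [Polynomial.eval_eq_sum_range]
  calc |∑ i ∈ Finset.range (q.natDegree+1), q.coeff i * x ^ i|
      ≤ ∑ i ∈ Finset.range (q.natDegree+1), |q.coeff i * x ^ i| :=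
        Finset.abs_sum_le_sum_abs _ _
    _ ≤ ∑ i ∈ Finset.range (q.natDegree+1), |q.coeff i| * (i.factorial : ℝ) * Real.exp |x| := by
        apply Finset.sum_le_sum
        intro i _
        rw [abs_mul, abs_pow, mul_assoc]
        apply mul_le_mul_of_nonneg_left _ (abs_nonneg _)
        have h := Real.pow_div_factorial_le_exp |x| (abs_nonneg x) i
        rw [div_le_iff₀ (by positivity : (0:ℝ) < (i.factorial:ℝ))] at h
        linarith [h]
    _ = pK q * Real.exp |x| := by rw [← Finset.sum_mul, pK]

lemma polyGauss_bound (q : ℝ[X]) (x : ℝ) :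
    ‖q.eval x * Real.exp (-x^2)‖ ≤ (pK q * Real.exp (1/2)) * Real.exp (-(1/2) * x^2) := by
  rw [norm_mul, Real.norm_eq_abs, Real.norm_eq_abs, Real.abs_exp]
  calc |q.eval x| * Real.exp (-x^2) ≤ (pK q * Real.exp |x|) * Real.exp (-x^2) :=
        mul_le_mul_of_nonneg_right (abs_poly_le q x) (Real.exp_pos _).le
    _ = pK q * Real.exp (|x| - x^2) := by rw [mul_assoc, ← Real.exp_add]; ring_nf
    _ ≤ pK q * Real.exp (1/2 + -(1/2) * x^2) := by
        apply mul_le_mul_of_nonneg_left _ (pK_nonneg q)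
        apply Real.exp_le_exp.2
        nlinarith [sq_nonneg (|x| - 1), sq_abs x]
    _ = (pK q * Real.exp (1/2)) * Real.exp (-(1/2) * x^2) := by
        rw [Real.exp_add]; ring

lemma integrable_polyGauss (q : ℝ[X]) :
    MeasureTheory.Integrable (fun x : ℝ => q.eval x * Real.exp (-x^2)) := by
  have hcont : Continuous (fun x : ℝ => q.eval x * Real.exp (-x^2)) := by
    exact q.continuous_aeval.mul (Real.continuous_exp.comp (by continuity))
  apply MeasureTheory.Integrable.mono'
    ((integrable_exp_neg_mul_sq (by norm_num : (0:ℝ) < 1/2)).const_mul (pK q * Real.exp (1/2)))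
    hcont.aestronglyMeasurable
  exact Filter.Eventually.of_forall (polyGauss_bound q)

lemma tendsto_polyGauss (q : ℝ[X]) (l : Filter ℝ)
    (hl : Filter.Tendsto (fun x : ℝ => |x|) l Filter.atTop) :
    Filter.Tendsto (fun x : ℝ => q.eval x * Real.exp (-x^2)) l (nhds 0) := by
  apply squeeze_zero_norm (polyGauss_bound q)
  have h1 : Filter.Tendsto (fun t : ℝ => (pK q * Real.exp (1/2)) * Real.exp (-(1/2) * t^2))
      Filter.atTop (nhds 0) := by
    rw [show (0:ℝ) = (pK q * Real.exp (1/2)) * 0 by ring]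
    apply Filter.Tendsto.const_mul
    apply Real.tendsto_exp_atBot.comp
    exact Filter.Tendsto.const_mul_atTop_of_neg (by norm_num : (-(1/2):ℝ) < 0)
      (tendsto_pow_atTop (by norm_num))
  have := h1.comp hl
  convert this using 2 with x
  simp [Function.comp, sq_abs]

noncomputable def IG (q : ℝ[X]) : ℝ := ∫ x : ℝ, q.eval x * Real.exp (-x^2)

lemma hasDerivAt_polyGauss2 (p : ℝ[X]) (x : ℝ) :
    HasDerivAt (fun t => p.eval t * Real.exp (-t^2))
      ((Polynomial.derivative p - Polynomial.C 2 * (Polynomial.X * p)).eval x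
        * Real.exp (-x^2)) x := by
  have hg : HasDerivAt (fun t : ℝ => Real.exp (-t^2)) (-2*x * Real.exp (-x^2)) x := by
    have h1 : HasDerivAt (fun t : ℝ => -t^2) (-2*x) x := by
      have := (hasDerivAt_pow 2 x).neg
      exact this.congr_deriv (by simp)
    have h2 := h1.exp
    convert h2 using 1
    ring
  have := (p.hasDerivAt x).mul hg
  refine this.congr_deriv ?_
  simp only [eval_sub, eval_mul, eval_C, eval_X]
  ring

lemma IG_deriv (p : ℝ[X]) :
    IG (Polynomial.derivative p - Polynomial.C 2 * (Polynomial.X * p)) = 0 := by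
  set q := Polynomial.derivative p - Polynomial.C 2 * (Polynomial.X * p) with hq
  have hint := integrable_polyGauss q
  have hIic : ∫ x in Set.Iic (0:ℝ), q.eval x * Real.exp (-x^2)
      = p.eval 0 * Real.exp (-(0:ℝ)^2) - 0 := by
    apply MeasureTheory.integral_Iic_of_hasDerivAt_of_tendsto'
      (fun x _ => hasDerivAt_polyGauss2 p x) hint.integrableOn
    exact tendsto_polyGauss p _ tendsto_abs_atBot_atTop
  have hIoi : ∫ x in Set.Ioi (0:ℝ), q.eval x * Real.exp (-x^2)
      = 0 - p.eval 0 * Real.exp (-(0:ℝ)^2) := by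
    apply MeasureTheory.integral_Ioi_of_hasDerivAt_of_tendsto'
      (fun x _ => hasDerivAt_polyGauss2 p x) hint.integrableOn
    exact tendsto_polyGauss p _ tendsto_abs_atTop_atTop
  have := intervalIntegral.integral_Iic_add_Ioi (b := (0:ℝ))
    hint.integrableOn hint.integrableOn
  rw [IG, ← this, hIic, hIoi]
  ring

lemma IG_sub (p q : ℝ[X]) : IG (p - q) = IG p - IG q := by
  rw [IG, IG, IG, ← MeasureTheory.integral_sub (integrable_polyGauss p) (integrable_polyGauss q)]
  congr 1
  funext x
  simp [sub_mul]

lemma IG_Cmul (a : ℝ) (p : ℝ[X]) : IG (Polynomial.C a * p) = a * IG p := by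
  rw [IG, IG, ← MeasureTheory.integral_const_mul]
  congr 1
  funext x
  simp [mul_assoc]

lemma IG_HP_sq_succ (n : ℕ) : IG (HP (n+1)^2) = 2*((n:ℝ)+1) * IG (HP n ^ 2) := by
  have hpoly : Polynomial.derivative (HP n * HP (n+1))
      - Polynomial.C 2 * (Polynomial.X * (HP n * HP (n+1)))
      = Polynomial.C (2*((n:ℝ)+1)) * HP n ^ 2 - HP (n+1)^2 := by
    have hd : Polynomial.derivative (HP (n+1)) = Polynomial.C (2*((n:ℝ)+1)) * HP n := by
      have := HP_deriv (n+1)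
      simpa using this
    have hHP1 : HP (n+1) = Polynomial.C 2 * (Polynomial.X * HP n)
        - Polynomial.derivative (HP n) := rfl
    rw [derivative_mul, hd, hHP1]
    ring
  have h0 := IG_deriv (HP n * HP (n+1))
  rw [hpoly, IG_sub, IG_Cmul] at h0
  linarith

lemma IG_HP_sq (n : ℕ) :
    IG (HP n ^ 2) = Real.sqrt Real.pi * 2^n * (n.factorial : ℝ) := by
  induction n with
  | zero =>
    have h := integral_gaussian 1
    simp only [HP]
    rw [show ((1:ℝ[X])^2) = 1 by ring, IG]
    simp only [eval_one, one_mul]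
    rw [show (fun x : ℝ => Real.exp (-x^2)) = (fun x : ℝ => Real.exp (-1*x^2)) by
      funext x; norm_num]
    rw [h]
    norm_num
  | succ n ih =>
    rw [IG_HP_sq_succ, ih, Nat.factorial_succ]
    push_cast
    ring

lemma gauss_sq (x : ℝ) : gauss x ^ 2 = Real.exp (-x^2) := by
  rw [gauss, pow_two, ← Real.exp_add]
  congr 1
  ring

lemma H_sq_eq (m : ℕ) (x : ℝ) :
    hermiteFun m x ^ 2 = (Dc m)^2 * (((HP m)^2).eval x * Real.exp (-x^2)) := by
  rw [hermiteFun_eq]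
  simp only [eval_pow]
  rw [← gauss_sq]
  ring

lemma integrable_H_sq (m : ℕ) :
    MeasureTheory.Integrable (fun x : ℝ => hermiteFun m x ^ 2) := by
  apply (((integrable_polyGauss ((HP m)^2)).const_mul ((Dc m)^2)).congr)
  exact Filter.Eventually.of_forall fun x => (H_sq_eq m x).symm

lemma Dc_sq_mul (m : ℕ) :
    (Dc m)^2 * (Real.sqrt Real.pi * 2^m * (m.factorial : ℝ)) = 1 := by
  have ha : (0:ℝ) < (2 ^ m * m.factorial : ℝ) := by positivity
  have h1 : (Dc m)^2 = ((2 ^ m * m.factorial : ℝ))⁻¹ * (Real.pi ^ (-(1:ℝ)/2)) := by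
    rw [Dc, mul_pow, ← Real.rpow_natCast ((2 ^ m * m.factorial : ℝ) ^ (-(1:ℝ)/2)) 2,
      ← Real.rpow_natCast (Real.pi ^ (-(1:ℝ)/4)) 2,
      ← Real.rpow_mul ha.le, ← Real.rpow_mul Real.pi_pos.le]
    norm_num
    rw [Real.rpow_neg_one]
    congr 1
    norm_num
  have h2 : Real.pi ^ (-(1:ℝ)/2) * Real.pi ^ ((1:ℝ)/2) = 1 := by
    rw [← Real.rpow_add Real.pi_pos]
    norm_num
  rw [h1, Real.sqrt_eq_rpow]
  calc ((2 ^ m * m.factorial : ℝ))⁻¹ * (Real.pi ^ (-(1:ℝ)/2))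
        * (Real.pi ^ ((1:ℝ)/2) * 2^m * (m.factorial : ℝ))
      = (((2 ^ m * m.factorial : ℝ))⁻¹ * (2 ^ m * (m.factorial : ℝ)))
        * (Real.pi ^ (-(1:ℝ)/2) * Real.pi ^ ((1:ℝ)/2)) := by ring
    _ = 1 := by rw [h2, inv_mul_cancel₀ ha.ne', one_mul]

lemma integral_H_sq (m : ℕ) : ∫ x : ℝ, (hermiteFun m x)^2 = 1 := by
  simp_rw [H_sq_eq]
  rw [MeasureTheory.integral_const_mul]
  rw [show (∫ x : ℝ, ((HP m)^2).eval x * Real.exp (-x^2)) = IG ((HP m)^2) from rfl,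
    IG_HP_sq]
  exact Dc_sq_mul m

lemma continuous_H (m : ℕ) : Continuous (hermiteFun m) := by
  rw [hermiteFun_eq]
  exact continuous_const.mul ((HP m).continuous_aeval.mul
    (Real.continuous_exp.comp (by continuity)))

lemma memLp_H (m : ℕ) : MeasureTheory.MemLp (hermiteFun m) 2 MeasureTheory.volume :=
  (MeasureTheory.memLp_two_iff_integrable_sq
    (continuous_H m).aestronglyMeasurable).2 (integrable_H_sq m)

lemma eLpNorm_H (m : ℕ) :
    MeasureTheory.eLpNorm (hermiteFun m) 2 MeasureTheory.volume = 1 := by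
  rw [(memLp_H m).eLpNorm_eq_integral_rpow_norm (by norm_num) (by norm_num)]
  have hx : ∀ x : ℝ, ‖hermiteFun m x‖ ^ ((2:ENNReal).toReal) = hermiteFun m x ^ 2 := by
    intro x
    rw [show ((2:ENNReal).toReal) = ((2:ℕ):ℝ) by norm_num, Real.rpow_natCast,
      Real.norm_eq_abs, sq_abs]
  simp_rw [hx]
  rw [integral_H_sq]
  norm_num

lemma L2_bound (N : ℕ) (c : ℕ → ℝ) (B : ℝ)
    (hB : ∑ m ∈ Finset.range (N+1), |c m| ≤ B) :
    (∫ x : ℝ, (∑ m ∈ Finset.range (N+1), c m * hermiteFun m x) ^ 2) ^ ((1:ℝ)/2) ≤ B := by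
  have hB0 : 0 ≤ B := le_trans (Finset.sum_nonneg fun i _ => abs_nonneg _) hB
  set f : ℝ → ℝ := fun x => ∑ m ∈ Finset.range (N+1), c m * hermiteFun m x with hf
  have hfsum : f = ∑ m ∈ Finset.range (N+1), (fun x => c m * hermiteFun m x) := by
    funext x
    rw [hf]
    simp
  have hmem : MeasureTheory.MemLp f 2 MeasureTheory.volume := by
    rw [hfsum]
    apply MeasureTheory.memLp_finsetSum'
    intro m _
    exact ((memLp_H m).const_mul (c m))
  have htri : MeasureTheory.eLpNorm f 2 MeasureTheory.volume ≤ ENNReal.ofReal B := by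
    rw [hfsum]
    refine le_trans (MeasureTheory.eLpNorm_sum_le
      (fun m _ => ((memLp_H m).const_mul (c m)).aestronglyMeasurable) (by norm_num)) ?_
    have heach : ∀ m ∈ Finset.range (N+1),
        MeasureTheory.eLpNorm (fun x => c m * hermiteFun m x) 2 MeasureTheory.volume
          = ENNReal.ofReal |c m| := by
      intro m _
      have : (fun x => c m * hermiteFun m x) = (c m) • (hermiteFun m) := by
        funext x; simp [smul_eq_mul]
      rw [this, MeasureTheory.eLpNorm_const_smul, eLpNorm_H, mul_one]
      rw [← Real.enorm_eq_ofReal_abs]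
    rw [Finset.sum_congr rfl heach, ← ENNReal.ofReal_sum_of_nonneg
      (fun m _ => abs_nonneg _)]
    exact ENNReal.ofReal_le_ofReal hB
  have heq : (∫ x : ℝ, f x ^ 2) ^ ((1:ℝ)/2)
      = (MeasureTheory.eLpNorm f 2 MeasureTheory.volume).toReal := by
    rw [hmem.eLpNorm_eq_integral_rpow_norm (by norm_num) (by norm_num)]
    have hx : ∀ x : ℝ, ‖f x‖ ^ ((2:ENNReal).toReal) = f x ^ 2 := by
      intro x
      rw [show ((2:ENNReal).toReal) = ((2:ℕ):ℝ) by norm_num, Real.rpow_natCast,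
        Real.norm_eq_abs, sq_abs]
    simp_rw [hx]
    rw [ENNReal.toReal_ofReal (by positivity)]
    norm_num
  show (∫ x : ℝ, f x ^ 2) ^ ((1:ℝ)/2) ≤ B
  rw [heq]
  calc (MeasureTheory.eLpNorm f 2 MeasureTheory.volume).toReal
      ≤ (ENNReal.ofReal B).toReal := ENNReal.toReal_mono ENNReal.ofReal_ne_top htri
    _ = B := ENNReal.toReal_ofReal hB0

lemma sum_shiftA1 (N : ℕ) (c : ℕ → ℝ) (hc : ∀ m, N+1 ≤ m → c m = 0) (F : ℕ → ℝ) :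
    ∑ j ∈ Finset.range (N+2), Real.sqrt (((j:ℝ)+1)/2) * c (j+1) * F j
      = ∑ m ∈ Finset.range (N+1), Real.sqrt ((m:ℝ)/2) * c m * F (m-1) := by
  rw [Finset.sum_range_succ, Finset.sum_range_succ, hc (N+2) (by omega), hc (N+1) (by omega)]
  rw [Finset.sum_range_succ' (fun m => Real.sqrt ((m:ℝ)/2) * c m * F (m-1)) N]
  simp only [Nat.cast_zero, Nat.cast_add, Nat.cast_one, Nat.add_sub_cancel]
  norm_num

lemma sum_shiftA2 (N : ℕ) (c : ℕ → ℝ) (F : ℕ → ℝ) :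
    ∑ j ∈ Finset.range (N+2), Real.sqrt ((j:ℝ)/2) * c (j-1) * F j
      = ∑ m ∈ Finset.range (N+1), Real.sqrt (((m:ℝ)+1)/2) * c m * F (m+1) := by
  rw [Finset.sum_range_succ' (fun j => Real.sqrt ((j:ℝ)/2) * c (j-1) * F j) (N+1)]
  simp only [Nat.cast_zero, Nat.cast_add, Nat.cast_one, Nat.add_sub_cancel]
  norm_num

lemma sqrt_two_mul (N : ℕ) :
    Real.sqrt (2*((N:ℝ)+1)) = 2 * Real.sqrt (((N:ℝ)+1)/2) := by
  rw [show (2*((N:ℝ)+1)) = 4 * (((N:ℝ)+1)/2) by ring,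
    show (4:ℝ) = 2^2 by norm_num,
    Real.sqrt_mul (by positivity), Real.sqrt_sq (by norm_num : (0:ℝ) ≤ 2)]

lemma step_lemma (N : ℕ) (c : ℕ → ℝ) (hc : ∀ m, N+1 ≤ m → c m = 0) (s : ℝ) (hs : |s| ≤ 1) :
    ∃ c' : ℕ → ℝ, (∀ m, N+2 ≤ m → c' m = 0) ∧
      (∀ x, ∑ j ∈ Finset.range (N+2), c' j * hermiteFun j x
          = ∑ m ∈ Finset.range (N+1), c m
              * (Real.sqrt ((m:ℝ)/2) * hermiteFun (m-1) x
                 + s * (Real.sqrt (((m:ℝ)+1)/2) * hermiteFun (m+1) x))) ∧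
      ∑ j ∈ Finset.range (N+2), |c' j|
        ≤ Real.sqrt (2*((N:ℝ)+1)) * ∑ m ∈ Finset.range (N+1), |c m| := by
  refine ⟨fun j => Real.sqrt (((j:ℝ)+1)/2) * c (j+1) + s * (Real.sqrt ((j:ℝ)/2) * c (j-1)),
    ?_, ?_, ?_⟩
  · intro m hm
    simp only
    rw [hc (m+1) (by omega), hc (m-1) (by omega)]
    ring
  · intro x
    have h1 := sum_shiftA1 N c hc (fun j => hermiteFun j x)
    have h2 := sum_shiftA2 N c (fun j => hermiteFun j x)
    calc ∑ j ∈ Finset.range (N+2),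
          (Real.sqrt (((j:ℝ)+1)/2) * c (j+1) + s * (Real.sqrt ((j:ℝ)/2) * c (j-1)))
            * hermiteFun j x
        = (∑ j ∈ Finset.range (N+2), Real.sqrt (((j:ℝ)+1)/2) * c (j+1) * hermiteFun j x)
          + s * (∑ j ∈ Finset.range (N+2), Real.sqrt ((j:ℝ)/2) * c (j-1) * hermiteFun j x) := by
          rw [Finset.mul_sum, ← Finset.sum_add_distrib]
          apply Finset.sum_congr rfl
          intros
          ring
      _ = (∑ m ∈ Finset.range (N+1), Real.sqrt ((m:ℝ)/2) * c m * hermiteFun (m-1) x)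
          + s * (∑ m ∈ Finset.range (N+1), Real.sqrt (((m:ℝ)+1)/2) * c m * hermiteFun (m+1) x) := by
          rw [h1, h2]
      _ = _ := by
          rw [Finset.mul_sum, ← Finset.sum_add_distrib]
          apply Finset.sum_congr rfl
          intros
          ring
  · have hSnn : (0:ℝ) ≤ ∑ m ∈ Finset.range (N+1), |c m| :=
      Finset.sum_nonneg fun _ _ => abs_nonneg _
    have hb : ∀ j ∈ Finset.range (N+2),
        |Real.sqrt (((j:ℝ)+1)/2) * c (j+1) + s * (Real.sqrt ((j:ℝ)/2) * c (j-1))|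
          ≤ Real.sqrt (((j:ℝ)+1)/2) * |c (j+1)| + Real.sqrt ((j:ℝ)/2) * |c (j-1)| := by
      intro j _
      calc |Real.sqrt (((j:ℝ)+1)/2) * c (j+1) + s * (Real.sqrt ((j:ℝ)/2) * c (j-1))|
          ≤ |Real.sqrt (((j:ℝ)+1)/2) * c (j+1)| + |s * (Real.sqrt ((j:ℝ)/2) * c (j-1))| :=
            abs_add_le _ _
        _ ≤ Real.sqrt (((j:ℝ)+1)/2) * |c (j+1)| + Real.sqrt ((j:ℝ)/2) * |c (j-1)| := by
            rw [abs_mul, abs_mul, abs_mul,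
              abs_of_nonneg (Real.sqrt_nonneg _), abs_of_nonneg (Real.sqrt_nonneg _)]
            have : |s| * (Real.sqrt ((j:ℝ)/2) * |c (j-1)|) ≤ 1 * (Real.sqrt ((j:ℝ)/2) * |c (j-1)|) :=
              mul_le_mul_of_nonneg_right hs (by positivity)
            nlinarith [Real.sqrt_nonneg (((j:ℝ))/2), abs_nonneg (c (j-1))]
    have hB1 : ∑ j ∈ Finset.range (N+2), Real.sqrt (((j:ℝ)+1)/2) * |c (j+1)|
        ≤ Real.sqrt (((N:ℝ)+1)/2) * ∑ m ∈ Finset.range (N+1), |c m| := by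
      rw [Finset.sum_range_succ, hc (N+2) (by omega)]
      simp only [abs_zero, mul_zero, add_zero]
      calc ∑ j ∈ Finset.range (N+1), Real.sqrt (((j:ℝ)+1)/2) * |c (j+1)|
          ≤ ∑ j ∈ Finset.range (N+1), Real.sqrt (((N:ℝ)+1)/2) * |c (j+1)| := by
            apply Finset.sum_le_sum
            intro j hj
            apply mul_le_mul_of_nonneg_right _ (abs_nonneg _)
            apply Real.sqrt_le_sqrt
            have : (j:ℝ) ≤ (N:ℝ) := by
              exact_mod_cast Nat.le_of_lt_succ (Finset.mem_range.mp hj)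
            linarith
        _ = Real.sqrt (((N:ℝ)+1)/2) * ∑ j ∈ Finset.range (N+1), |c (j+1)| := by
            rw [Finset.mul_sum]
        _ ≤ Real.sqrt (((N:ℝ)+1)/2) * ∑ m ∈ Finset.range (N+1), |c m| := by
            apply mul_le_mul_of_nonneg_left _ (Real.sqrt_nonneg _)
            have e1 : ∑ m ∈ Finset.range (N+2), |c m|
                = ∑ j ∈ Finset.range (N+1), |c (j+1)| + |c 0| :=
              Finset.sum_range_succ' (fun m => |c m|) (N+1)
            have e2 : ∑ m ∈ Finset.range (N+2), |c m|
                = ∑ m ∈ Finset.range (N+1), |c m| + |c (N+1)| :=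
              Finset.sum_range_succ (fun m => |c m|) (N+1)
            rw [hc (N+1) (by omega)] at e2
            simp only [abs_zero, add_zero] at e2
            have := abs_nonneg (c 0)
            linarith
    have hB2 : ∑ j ∈ Finset.range (N+2), Real.sqrt ((j:ℝ)/2) * |c (j-1)|
        ≤ Real.sqrt (((N:ℝ)+1)/2) * ∑ m ∈ Finset.range (N+1), |c m| := by
      rw [Finset.sum_range_succ' (fun j => Real.sqrt ((j:ℝ)/2) * |c (j-1)|) (N+1)]
      simp only [Nat.cast_zero, Nat.cast_add, Nat.cast_one, Nat.add_sub_cancel,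
        zero_div, Real.sqrt_zero, zero_mul, add_zero]
      calc ∑ i ∈ Finset.range (N+1), Real.sqrt (((i:ℝ)+1)/2) * |c i|
          ≤ ∑ i ∈ Finset.range (N+1), Real.sqrt (((N:ℝ)+1)/2) * |c i| := by
            apply Finset.sum_le_sum
            intro i hi
            apply mul_le_mul_of_nonneg_right _ (abs_nonneg _)
            apply Real.sqrt_le_sqrt
            have : (i:ℝ) ≤ (N:ℝ) := by
              exact_mod_cast Nat.le_of_lt_succ (Finset.mem_range.mp hi)
            linarith
        _ = Real.sqrt (((N:ℝ)+1)/2) * ∑ m ∈ Finset.range (N+1), |c m| := by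
            rw [Finset.mul_sum]
    calc ∑ j ∈ Finset.range (N+2),
          |Real.sqrt (((j:ℝ)+1)/2) * c (j+1) + s * (Real.sqrt ((j:ℝ)/2) * c (j-1))|
        ≤ ∑ j ∈ Finset.range (N+2),
            (Real.sqrt (((j:ℝ)+1)/2) * |c (j+1)| + Real.sqrt ((j:ℝ)/2) * |c (j-1)|) :=
          Finset.sum_le_sum hb
      _ = (∑ j ∈ Finset.range (N+2), Real.sqrt (((j:ℝ)+1)/2) * |c (j+1)|)
          + ∑ j ∈ Finset.range (N+2), Real.sqrt ((j:ℝ)/2) * |c (j-1)| :=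
          Finset.sum_add_distrib
      _ ≤ Real.sqrt (((N:ℝ)+1)/2) * (∑ m ∈ Finset.range (N+1), |c m|)
          + Real.sqrt (((N:ℝ)+1)/2) * (∑ m ∈ Finset.range (N+1), |c m|) := add_le_add hB1 hB2
      _ = Real.sqrt (2*((N:ℝ)+1)) * ∑ m ∈ Finset.range (N+1), |c m| := by
          rw [sqrt_two_mul]
          ring

lemma rpow_step (a : ℝ) (ha : 0 ≤ a) (ℓ : ℕ) :
    Real.sqrt (a+2) * a ^ ((ℓ:ℝ)/2) ≤ (a+2) ^ (((ℓ:ℝ)+1)/2) := by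
  have h2 : (0:ℝ) < a + 2 := by linarith
  calc Real.sqrt (a+2) * a ^ ((ℓ:ℝ)/2)
      ≤ Real.sqrt (a+2) * (a+2) ^ ((ℓ:ℝ)/2) := by
        apply mul_le_mul_of_nonneg_left _ (Real.sqrt_nonneg _)
        exact Real.rpow_le_rpow ha (by linarith) (by positivity)
    _ = (a+2) ^ ((1:ℝ)/2) * (a+2) ^ ((ℓ:ℝ)/2) := by rw [Real.sqrt_eq_rpow]
    _ = (a+2) ^ (((ℓ:ℝ)+1)/2) := by
        rw [← Real.rpow_add h2]
        congr 1
        ring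

lemma rep_base (n : ℕ) :
    ∃ c : ℕ → ℝ, (∀ m, n+0+1 ≤ m → c m = 0) ∧
      (∀ x, hermiteFun n x = ∑ m ∈ Finset.range (n+0+1), c m * hermiteFun m x) ∧
      ∑ m ∈ Finset.range (n+0+1), |c m| ≤ (2*(n:ℝ)+2*((0:ℕ):ℝ)) ^ (((0:ℕ):ℝ)/2) := by
  refine ⟨fun m => if m = n then 1 else 0, ?_, ?_, ?_⟩
  · intro m hm
    simp only
    rw [if_neg (by omega)]
  · intro x
    rw [Finset.sum_congr rfl (fun m _ => by
      rw [ite_mul, one_mul, zero_mul] :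
        ∀ m ∈ Finset.range (n+0+1), (if m = n then (1:ℝ) else 0) * hermiteFun m x
          = if m = n then hermiteFun m x else 0)]
    rw [Finset.sum_ite_eq' (Finset.range (n+0+1)) n (fun m => hermiteFun m x)]
    rw [if_pos (Finset.mem_range.mpr (by omega))]
  · rw [Finset.sum_congr rfl (fun m _ => by
      rw [apply_ite abs, abs_one, abs_zero] :
        ∀ m ∈ Finset.range (n+0+1), |if m = n then (1:ℝ) else 0|
          = if m = n then (1:ℝ) else 0)]
    rw [Finset.sum_ite_eq' (Finset.range (n+0+1)) n (fun _ => (1:ℝ))]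
    rw [if_pos (Finset.mem_range.mpr (by omega))]
    simp only [Nat.cast_zero, zero_div, Real.rpow_zero]
    exact le_refl 1

lemma rep_deriv (n ℓ : ℕ) :
    ∃ c : ℕ → ℝ, (∀ m, n+ℓ+1 ≤ m → c m = 0) ∧
      (∀ x, iteratedDeriv ℓ (hermiteFun n) x
        = ∑ m ∈ Finset.range (n+ℓ+1), c m * hermiteFun m x) ∧
      ∑ m ∈ Finset.range (n+ℓ+1), |c m| ≤ (2*(n:ℝ)+2*(ℓ:ℝ)) ^ ((ℓ:ℝ)/2) := by
  induction ℓ with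
  | zero =>
    obtain ⟨c, h1, h2, h3⟩ := rep_base n
    exact ⟨c, h1, fun x => by rw [iteratedDeriv_zero]; exact h2 x, h3⟩
  | succ ℓ ih =>
    obtain ⟨c, hsupp, hrep, hbound⟩ := ih
    have hfun : iteratedDeriv ℓ (hermiteFun n)
        = fun x => ∑ m ∈ Finset.range (n+ℓ+1), c m * hermiteFun m x := funext hrep
    obtain ⟨c', hsupp', hid, hbd⟩ := step_lemma (n+ℓ) c hsupp (-1) (by norm_num)
    have hidx : n+(ℓ+1)+1 = (n+ℓ)+2 := by omega
    refine ⟨c', fun m hm => hsupp' m (by omega), ?_, ?_⟩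
    · intro x
      rw [hidx]
      rw [iteratedDeriv_succ, hfun]
      calc deriv (fun y => ∑ m ∈ Finset.range (n+ℓ+1), c m * hermiteFun m y) x
          = ∑ m ∈ Finset.range (n+ℓ+1), deriv (fun y => c m * hermiteFun m y) x := by
            apply deriv_fun_sum
            intro m _
            exact ((hermite_differentiable m) x).const_mul (c m)
        _ = ∑ m ∈ Finset.range (n+ℓ+1), c m
              * (Real.sqrt ((m:ℝ)/2) * hermiteFun (m-1) x
                 + (-1) * (Real.sqrt (((m:ℝ)+1)/2) * hermiteFun (m+1) x)) := by
            apply Finset.sum_congr rfl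
            intro m _
            rw [deriv_const_mul (c m) ((hermite_differentiable m) x), ladder_d]
            ring
        _ = ∑ j ∈ Finset.range ((n+ℓ)+2), c' j * hermiteFun j x := (hid x).symm
    · rw [hidx]
      have key := rpow_step (2*(n:ℝ)+2*(ℓ:ℝ)) (by positivity) ℓ
      have e1 : (2:ℝ)*((((n+ℓ:ℕ)):ℝ)+1) = (2*(n:ℝ)+2*(ℓ:ℝ)) + 2 := by push_cast; ring
      have e2 : (2*(n:ℝ)+2*(((ℓ+1:ℕ)):ℝ)) = (2*(n:ℝ)+2*(ℓ:ℝ)) + 2 := by push_cast; ring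
      have e3 : ((((ℓ+1:ℕ)):ℝ)) = (ℓ:ℝ)+1 := by push_cast; ring
      calc ∑ j ∈ Finset.range ((n+ℓ)+2), |c' j|
          ≤ Real.sqrt (2*((((n+ℓ:ℕ)):ℝ)+1)) * ∑ m ∈ Finset.range (n+ℓ+1), |c m| := hbd
        _ ≤ Real.sqrt (2*((((n+ℓ:ℕ)):ℝ)+1)) * ((2*(n:ℝ)+2*(ℓ:ℝ)) ^ ((ℓ:ℝ)/2)) :=
            mul_le_mul_of_nonneg_left hbound (Real.sqrt_nonneg _)
        _ ≤ (2*(n:ℝ)+2*(((ℓ+1:ℕ)):ℝ)) ^ ((((ℓ+1:ℕ)):ℝ)/2) := by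
            rw [e1, e2, e3]
            exact key

lemma rep_mul (n ℓ : ℕ) :
    ∃ c : ℕ → ℝ, (∀ m, n+ℓ+1 ≤ m → c m = 0) ∧
      (∀ x : ℝ, x^ℓ * hermiteFun n x
        = ∑ m ∈ Finset.range (n+ℓ+1), c m * hermiteFun m x) ∧
      ∑ m ∈ Finset.range (n+ℓ+1), |c m| ≤ (2*(n:ℝ)+2*(ℓ:ℝ)) ^ ((ℓ:ℝ)/2) := by
  induction ℓ with
  | zero =>
    obtain ⟨c, h1, h2, h3⟩ := rep_base n
    exact ⟨c, h1, fun x => by rw [pow_zero, one_mul]; exact h2 x, h3⟩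
  | succ ℓ ih =>
    obtain ⟨c, hsupp, hrep, hbound⟩ := ih
    obtain ⟨c', hsupp', hid, hbd⟩ := step_lemma (n+ℓ) c hsupp 1 (by norm_num)
    have hidx : n+(ℓ+1)+1 = (n+ℓ)+2 := by omega
    refine ⟨c', fun m hm => hsupp' m (by omega), ?_, ?_⟩
    · intro x
      rw [hidx]
      calc x^(ℓ+1) * hermiteFun n x = x * (x^ℓ * hermiteFun n x) := by ring
        _ = x * ∑ m ∈ Finset.range (n+ℓ+1), c m * hermiteFun m x := by rw [hrep x]
        _ = ∑ m ∈ Finset.range (n+ℓ+1), c m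
              * (Real.sqrt ((m:ℝ)/2) * hermiteFun (m-1) x
                 + 1 * (Real.sqrt (((m:ℝ)+1)/2) * hermiteFun (m+1) x)) := by
            rw [Finset.mul_sum]
            apply Finset.sum_congr rfl
            intro m _
            rw [show x * (c m * hermiteFun m x) = c m * (x * hermiteFun m x) by ring, ladder_x]
            ring
        _ = ∑ j ∈ Finset.range ((n+ℓ)+2), c' j * hermiteFun j x := (hid x).symm
    · rw [hidx]
      have key := rpow_step (2*(n:ℝ)+2*(ℓ:ℝ)) (by positivity) ℓ
      have e1 : (2:ℝ)*((((n+ℓ:ℕ)):ℝ)+1) = (2*(n:ℝ)+2*(ℓ:ℝ)) + 2 := by push_cast; ring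
      have e2 : (2*(n:ℝ)+2*(((ℓ+1:ℕ)):ℝ)) = (2*(n:ℝ)+2*(ℓ:ℝ)) + 2 := by push_cast; ring
      have e3 : ((((ℓ+1:ℕ)):ℝ)) = (ℓ:ℝ)+1 := by push_cast; ring
      calc ∑ j ∈ Finset.range ((n+ℓ)+2), |c' j|
          ≤ Real.sqrt (2*((((n+ℓ:ℕ)):ℝ)+1)) * ∑ m ∈ Finset.range (n+ℓ+1), |c m| := hbd
        _ ≤ Real.sqrt (2*((((n+ℓ:ℕ)):ℝ)+1)) * ((2*(n:ℝ)+2*(ℓ:ℝ)) ^ ((ℓ:ℝ)/2)) :=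
            mul_le_mul_of_nonneg_left hbound (Real.sqrt_nonneg _)
        _ ≤ (2*(n:ℝ)+2*(((ℓ+1:ℕ)):ℝ)) ^ ((((ℓ+1:ℕ)):ℝ)/2) := by
            rw [e1, e2, e3]
            exact key

end HermiteAux

/-- `‖H_n^{(ℓ)}‖_{L²(ℝ)} ≤ (2n+2ℓ)^{ℓ/2}` and `‖x^ℓ H_n‖_{L²(ℝ)} ≤ (2n+2ℓ)^{ℓ/2}`. -/
theorem hermite_deriv_mul_L2_bound (n ℓ : ℕ) :
    (∫ x : ℝ, (iteratedDeriv ℓ (hermiteFun n) x) ^ 2) ^ ((1 : ℝ) / 2) ≤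
        (2 * n + 2 * ℓ : ℝ) ^ ((ℓ : ℝ) / 2) ∧
    (∫ x : ℝ, (x ^ ℓ * hermiteFun n x) ^ 2) ^ ((1 : ℝ) / 2) ≤
        (2 * n + 2 * ℓ : ℝ) ^ ((ℓ : ℝ) / 2) := by
  constructor
  · obtain ⟨c, hsupp, hrep, hbound⟩ := HermiteAux.rep_deriv n ℓ
    have heq : (∫ x : ℝ, (iteratedDeriv ℓ (hermiteFun n) x) ^ 2)
        = ∫ x : ℝ, (∑ m ∈ Finset.range (n+ℓ+1), c m * hermiteFun m x) ^ 2 := by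
      congr 1
      funext x
      rw [hrep x]
    rw [heq]
    exact HermiteAux.L2_bound (n+ℓ) c _ hbound
  · obtain ⟨c, hsupp, hrep, hbound⟩ := HermiteAux.rep_mul n ℓ
    have heq : (∫ x : ℝ, (x ^ ℓ * hermiteFun n x) ^ 2)
        = ∫ x : ℝ, (∑ m ∈ Finset.range (n+ℓ+1), c m * hermiteFun m x) ^ 2 := by
      congr 1
      funext x
      rw [hrep x]
    rw [heq]
    exact HermiteAux.L2_bound (n+ℓ) c _ hbound
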